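/- arXiv:2110.04973 — 5 statements merged into one kernel-verified Lean document; each statement's English description precedes it below -/
import Mathlib

section
/- Let G be a group acting sharply k-transitively on a finite set X with n elements, and let x = (x_1,...,x_n) be an enumeration of X such that the n−k windows (x_i,...,x_{i+k}) for 1 ≤ i ≤ n−k lie in pairwise distinct orbits of the coordinatewise G-action on the set of (k+1)-tuples of distinct elements of X. Then the orbit of x under G (acting coordinatewise) has the property that every (k+1)-tuple of distinct elements of X occurs exactly once as a contiguous subsequence of exactly one sequence in the orbit. -/
/-- The orbit of a sequencing of a sharply `k`-transitive `G`-set `X` forms an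
`(n, k+1)`-permutation design: every `(k+1)`-tuple of distinct elements occurs exactly
once as a contiguous subsequence of exactly one sequence in the orbit. -/
theorem stmt_0 {G X : Type*} [Group G] [MulAction G X] (n k : ℕ)
    (sharp : ∀ a b : Fin k → X, Function.Injective a → Function.Injective b →
      ∃! g : G, ∀ i, g • a i = b i)
    (x : Fin n ≃ X)
    (hwin : ∀ i₁ i₂ : Fin (n - k),
      (∃ g : G, ∀ j : Fin (k + 1),
        g • x ⟨i₁.val + j.val, by have := i₁.isLt; have := j.isLt; omega⟩ =
          x ⟨i₂.val + j.val, by have := i₂.isLt; have := j.isLt; omega⟩) → i₁ = i₂)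
    (t : Fin (k + 1) → X) (ht : Function.Injective t) :
    ∃! q : G × Fin (n - k), ∀ j : Fin (k + 1),
      q.1 • x ⟨q.2.val + j.val, by have := q.2.isLt; have := j.isLt; omega⟩ = t j := by
  classical
  haveI : Fintype X := Fintype.ofEquiv (Fin n) x
  have cardX : Fintype.card X = n := by
    rw [← Fintype.card_fin n]; exact Fintype.card_congr x.symm
  -- base injective k-tuple
  have ha : Function.Injective (fun j : Fin k => t (Fin.castSucc j)) :=
    fun i j h => Fin.castSucc_injective _ (ht h)
  set a : Fin k → X := fun j => t (Fin.castSucc j) with ha_def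
  -- G is in bijection with embeddings Fin k ↪ X
  let e : G → (Fin k ↪ X) := fun g =>
    ⟨fun i => g • a i, fun i j h => ha (MulAction.injective g h)⟩
  have he : Function.Bijective e := by
    constructor
    · intro g g' h
      obtain ⟨u, hu, huniq⟩ := sharp a (fun i => g • a i) ha
        (fun i j hij => ha (MulAction.injective g hij))
      have h2 : ∀ i, g' • a i = g • a i := fun i =>
        congrFun (congrArg (fun f : Fin k ↪ X => (f : Fin k → X)) h.symm) i
      exact (huniq g fun _ => rfl).trans (huniq g' h2).symm
    · intro b
      obtain ⟨g, hg, -⟩ := sharp a b ha b.injective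
      exact ⟨g, Function.Embedding.ext hg⟩
  haveI : Finite G := Finite.of_injective e he.injective
  haveI : Fintype G := Fintype.ofFinite G
  have cardG : Fintype.card G = Nat.descFactorial n k := by
    rw [Fintype.card_of_bijective he, Fintype.card_embedding_eq, cardX, Fintype.card_fin]
  -- windows
  have hwlt : ∀ (i : Fin (n - k)) (j : Fin (k + 1)), i.val + j.val < n := fun i j => by
    have := i.isLt; have := j.isLt; omega
  let w : Fin (n - k) → Fin (k + 1) → X := fun i j => x ⟨i.val + j.val, hwlt i j⟩
  have hwinj : ∀ i, Function.Injective (w i) := by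
    intro i j j' h
    have h2 : i.val + j.val = i.val + j'.val := congrArg Fin.val (x.injective h)
    exact Fin.ext (by omega)
  let Φ : G × Fin (n - k) → (Fin (k + 1) ↪ X) := fun q =>
    ⟨fun j => q.1 • w q.2 j, fun j j' h => hwinj q.2 (MulAction.injective q.1 h)⟩
  have hΦinj : Function.Injective Φ := by
    rintro ⟨g, i⟩ ⟨g', i'⟩ h
    have hj : ∀ j, g • w i j = g' • w i' j := fun j =>
      congrFun (congrArg (fun f : Fin (k + 1) ↪ X => (f : Fin (k + 1) → X)) h) j
    have hii : i = i' := by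
      apply hwin
      refine ⟨g'⁻¹ * g, fun j => ?_⟩
      show (g'⁻¹ * g) • w i j = w i' j
      rw [mul_smul, hj j, inv_smul_smul]
    subst hii
    have hgg : g = g' := by
      obtain ⟨u, hu, huniq⟩ := sharp (fun j : Fin k => w i (Fin.castSucc j))
        (fun j : Fin k => g • w i (Fin.castSucc j))
        (fun p q hpq => Fin.castSucc_injective _ (hwinj i hpq))
        (fun p q hpq => Fin.castSucc_injective _ (hwinj i (MulAction.injective g hpq)))
      exact (huniq g fun _ => rfl).trans
        (huniq g' fun j => (hj (Fin.castSucc j)).symm).symm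
    rw [hgg]
  have hcard : Fintype.card (G × Fin (n - k)) = Fintype.card (Fin (k + 1) ↪ X) := by
    rw [Fintype.card_prod, Fintype.card_fin, cardG, Fintype.card_embedding_eq, cardX,
      Fintype.card_fin, Nat.descFactorial_succ, mul_comm]
  have hΦbij : Function.Bijective Φ :=
    (Fintype.bijective_iff_injective_and_card Φ).mpr ⟨hΦinj, hcard⟩
  obtain ⟨q, hq⟩ := hΦbij.surjective ⟨t, ht⟩
  refine ⟨q, ?_, ?_⟩
  · intro j
    exact congrFun (congrArg (fun f : Fin (k + 1) ↪ X => (f : Fin (k + 1) → X)) hq) j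
  · intro q' hq'
    apply hΦinj
    rw [hq]
    exact Function.Embedding.ext hq'
end

section
/- For any odd prime p, the sequence (0, 1, p−1, 2, p−2, 3, p−3, ...) enumerating Z/pZ (i.e., x_1 = 0 and x_{i+1} = x_i + (−1)^{i+1}·⌈i/1⌉ alternating: differences 1, −2, 3, −4, ...) has the property that the p−2 ratios ρ_i = (x_{i+2}−x_{i+1})/(x_i−x_{i+1}) computed in F_p are pairwise distinct. -/
/-- The zigzag enumeration `0, 1, -1, 2, -2, …` of `Z/pZ` (0-indexed). -/
def zigzag (p : ℕ) (j : ℕ) : ZMod p :=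
  if Even j then -((j / 2 : ℕ) : ZMod p) else ((j + 1) / 2 : ℕ)

lemma zigzag_ratio (p : ℕ) [Fact p.Prime] (i : ℕ) :
    (zigzag p (i + 2) - zigzag p (i + 1)) / (zigzag p i - zigzag p (i + 1)) =
      ((i + 2 : ℕ) : ZMod p) / ((i + 1 : ℕ) : ZMod p) := by
  rcases Nat.even_or_odd i with ⟨k, rfl⟩ | ⟨k, rfl⟩
  · have h1 : ¬ Even (k + k + 1) := by simp [Nat.even_add_one, Nat.even_add]
    have h2 : Even (k + k + 2) := by simp [Nat.even_add]
    have h0 : Even (k + k) := by simp [Nat.even_add]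
    simp only [zigzag, if_pos h0, if_neg h1, if_pos h2]
    have e1 : (k + k + 2) / 2 = k + 1 := by omega
    have e2 : (k + k + 1 + 1) / 2 = k + 1 := by omega
    have e3 : (k + k) / 2 = k := by omega
    simp only [e1, e2, e3]
    have : -((k + 1 : ℕ) : ZMod p) - ((k + 1 : ℕ) : ZMod p) = -((k + k + 2 : ℕ) : ZMod p) := by
      push_cast; ring
    rw [this]
    have : -((k : ℕ) : ZMod p) - ((k + 1 : ℕ) : ZMod p) = -((k + k + 1 : ℕ) : ZMod p) := by
      push_cast; ring
    rw [this, neg_div_neg_eq]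
  · have h1 : Even (2 * k + 1 + 1) := by simp [Nat.even_add]
    have h2 : ¬ Even (2 * k + 1 + 2) := by simp [Nat.even_add_one, Nat.even_add]
    have h0 : ¬ Even (2 * k + 1) := by simp [Nat.even_add_one]
    simp only [zigzag, if_neg h0, if_pos h1, if_neg h2]
    have e1 : (2 * k + 1 + 2 + 1) / 2 = k + 2 := by omega
    have e2 : (2 * k + 1 + 1) / 2 = k + 1 := by omega
    have e3 : (2 * k + 1 + 1) / 2 = k + 1 := by omega
    rw [e1, e2]
    have : ((k + 2 : ℕ) : ZMod p) - -((k + 1 : ℕ) : ZMod p) = ((2 * k + 1 + 2 : ℕ) : ZMod p) := by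
      push_cast; ring
    rw [this]
    have : ((k + 1 : ℕ) : ZMod p) - -((k + 1 : ℕ) : ZMod p) = ((2 * k + 1 + 1 : ℕ) : ZMod p) := by
      push_cast; ring
    rw [this]

/-- For an odd prime `p`, the `p - 2` ratios `(x_{i+2} - x_{i+1})/(x_i - x_{i+1})`
of the zigzag sequence `0, 1, p-1, 2, p-2, …` in `F_p` are pairwise distinct. -/
theorem stmt_7 (p : ℕ) [hp : Fact p.Prime] (hodd : Odd p) :
    Function.Injective (fun i : Fin (p - 2) =>
      (zigzag p (i.val + 2) - zigzag p (i.val + 1)) /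
        (zigzag p i.val - zigzag p (i.val + 1))) := by
  have hp5 : 2 ≤ p := hp.out.two_le
  intro a b hab
  simp only [zigzag_ratio] at hab
  have ha1 : ((a.val + 1 : ℕ) : ZMod p) ≠ 0 := by
    rw [Ne, ZMod.natCast_eq_zero_iff]
    have := a.isLt
    intro h
    have := Nat.le_of_dvd (by omega) h
    omega
  have hb1 : ((b.val + 1 : ℕ) : ZMod p) ≠ 0 := by
    rw [Ne, ZMod.natCast_eq_zero_iff]
    have := b.isLt
    intro h
    have := Nat.le_of_dvd (by omega) h
    omega
  rw [div_eq_div_iff ha1 hb1] at hab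
  push_cast at hab
  have key : ((a.val : ℕ) : ZMod p) = ((b.val : ℕ) : ZMod p) := by
    push_cast
    linear_combination -hab
  have hva : a.val < p := by have := a.isLt; omega
  have hvb : b.val < p := by have := b.isLt; omega
  have : a.val = b.val := by
    have := ZMod.val_cast_of_lt hva
    have := ZMod.val_cast_of_lt hvb
    rw [← ZMod.val_cast_of_lt hva, ← ZMod.val_cast_of_lt hvb, key]
  exact Fin.ext this
end

section
/- For every odd prime p, there exists a set of p(p−1) permutations of Z/pZ such that every ordered triple of pairwise distinct elements of Z/pZ occurs as a contiguous subsequence of exactly one permutation in the set (a (p,3)-permutation design). -/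
/-- The zigzag sequence `0, 1, -1, 2, -2, ...` in `ZMod p`. -/
def zigSeq (p : ℕ) : ℕ → ZMod p := fun k =>
  if k % 2 = 0 then -((k / 2 : ℕ) : ZMod p) else ((k / 2 + 1 : ℕ) : ZMod p)

/-- Differences of the zigzag sequence: `1, -2, 3, -4, ...`. -/
def zigDiff (p : ℕ) : ℕ → ZMod p := fun k => (-1) ^ k * ((k + 1 : ℕ) : ZMod p)

lemma zigSeq_succ (p k : ℕ) : zigSeq p (k + 1) = zigSeq p k + zigDiff p k := by
  rcases Nat.even_or_odd k with ⟨m, rfl⟩ | ⟨m, rfl⟩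
  · have h1 : (m + m) % 2 = 0 := by omega
    have h2 : (m + m + 1) % 2 = 1 := by omega
    have h3 : (m + m) / 2 = m := by omega
    have h4 : (m + m + 1) / 2 = m := by omega
    have h5 : ((-1 : ZMod p)) ^ (m + m) = 1 := by
      rw [← two_mul, pow_mul]; norm_num
    simp only [zigSeq, zigDiff, h1, h2, h3, h4, h5, if_pos, if_neg, one_ne_zero]
    push_cast
    ring
  · have h2 : (2 * m + 1 + 1) % 2 = 0 := by omega
    have h3 : (2 * m + 1) / 2 = m := by omega
    have h4 : (2 * m + 1 + 1) / 2 = m + 1 := by omega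
    have h5 : ((-1 : ZMod p)) ^ (2 * m + 1) = -1 := by
      rw [pow_succ, pow_mul]; norm_num
    simp only [zigSeq, zigDiff, h3, h4, h5]
    rw [if_pos h2, if_neg (by omega)]
    push_cast
    ring

lemma zigSeq_inj {p : ℕ} [NeZero p] (hodd : Odd p) {k l : ℕ} (hk : k < p) (hl : l < p)
    (h : zigSeq p k = zigSeq p l) : k = l := by
  obtain ⟨M, hM⟩ := hodd
  have hcast : ∀ a b : ℕ, a < p → b < p → ((a : ZMod p) = (b : ZMod p)) → a = b := by
    intro a b ha hb hab
    have := congrArg ZMod.val hab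
    rwa [ZMod.val_cast_of_lt ha, ZMod.val_cast_of_lt hb] at this
  unfold zigSeq at h
  by_cases hk2 : k % 2 = 0 <;> by_cases hl2 : l % 2 = 0
  · rw [if_pos hk2, if_pos hl2] at h
    have := hcast (k / 2) (l / 2) (by omega) (by omega) (neg_inj.mp h)
    omega
  · rw [if_pos hk2, if_neg hl2] at h
    have h0 : ((k / 2 + (l / 2 + 1) : ℕ) : ZMod p) = 0 := by
      push_cast at h ⊢
      linear_combination -h
    obtain ⟨c, hc⟩ := (ZMod.natCast_eq_zero_iff _ p).mp h0
    rcases Nat.eq_zero_or_pos c with rfl | hcpos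
    · omega
    · have := Nat.le_mul_of_pos_right p hcpos
      omega
  · rw [if_neg hk2, if_pos hl2] at h
    have h0 : ((l / 2 + (k / 2 + 1) : ℕ) : ZMod p) = 0 := by
      push_cast at h ⊢
      linear_combination h
    obtain ⟨c, hc⟩ := (ZMod.natCast_eq_zero_iff _ p).mp h0
    rcases Nat.eq_zero_or_pos c with rfl | hcpos
    · omega
    · have := Nat.le_mul_of_pos_right p hcpos
      omega
  · rw [if_neg hk2, if_neg hl2] at h
    have := hcast (k / 2 + 1) (l / 2 + 1) (by omega) (by omega) h
    omega

/-- For every odd prime `p` there exists a `(p,3)`-permutation design: a family of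
`p(p-1)` distinct permutations of `Z/pZ` such that every ordered triple of pairwise
distinct elements occurs as a contiguous subsequence of exactly one permutation,
in exactly one position. -/
theorem stmt_9 (p : ℕ) (hp : p.Prime) (hodd : Odd p) :
    ∃ L : Fin (p * (p - 1)) → (Fin p ≃ ZMod p), Function.Injective L ∧
      ∀ t : Fin 3 → ZMod p, Function.Injective t →
        ∃! q : Fin (p * (p - 1)) × Fin (p - 2), ∀ j : Fin 3,
          L q.1 ⟨q.2.val + j.val, by have := q.2.isLt; have := j.isLt; omega⟩ = t j := by
  haveI hF : Fact p.Prime := ⟨hp⟩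
  have hp3 : 3 ≤ p := by
    obtain ⟨M, hM⟩ := hodd
    have := hp.two_le
    omega
  haveI : NeZero p := ⟨by omega⟩
  -- the base permutation
  have hSbij : Function.Bijective (fun k : Fin p => zigSeq p k.val) := by
    rw [Fintype.bijective_iff_injective_and_card]
    refine ⟨fun k l hkl => Fin.ext (zigSeq_inj hodd k.isLt l.isLt hkl),
      by simp [ZMod.card]⟩
  set S : Fin p ≃ ZMod p := Equiv.ofBijective _ hSbij with hSdef
  have hcard : Fintype.card (Fin (p * (p - 1))) = Fintype.card ((ZMod p)ˣ × ZMod p) := by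
    simp [ZMod.card, ZMod.card_units_eq_totient, Nat.totient_prime hp, Nat.mul_comm]
  set e : Fin (p * (p - 1)) ≃ ((ZMod p)ˣ × ZMod p) := Fintype.equivOfCardEq hcard with hedef
  set L : Fin (p * (p - 1)) → (Fin p ≃ ZMod p) := fun q =>
    S.trans ((Equiv.mulLeft₀ ((e q).1 : ZMod p) (e q).1.ne_zero).trans
      (Equiv.addRight (e q).2)) with hLdef
  have hL : ∀ q (k : Fin p), L q k = ((e q).1 : ZMod p) * zigSeq p k.val + (e q).2 :=
    fun q k => rfl
  have hz0 : zigSeq p 0 = 0 := by simp [zigSeq]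
  have hz1 : zigSeq p 1 = 1 := by norm_num [zigSeq]
  -- nonvanishing of differences
  have hDk : ∀ k : ℕ, k + 1 < p → zigDiff p k ≠ 0 := by
    intro k hk hh
    unfold zigDiff at hh
    rcases mul_eq_zero.mp hh with h1 | h1
    · exact (pow_ne_zero k (by
        intro hz
        exact one_ne_zero (neg_eq_zero.mp hz))) h1
    · have := congrArg ZMod.val h1
      rw [ZMod.val_cast_of_lt (by omega), ZMod.val_zero] at this
      omega
  refine ⟨L, ?_, ?_⟩
  · -- injectivity of L
    intro q q' hqq'
    have h0 : L q ⟨0, by omega⟩ = L q' ⟨0, by omega⟩ := by rw [hqq']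
    have h1 : L q ⟨1, by omega⟩ = L q' ⟨1, by omega⟩ := by rw [hqq']
    rw [hL, hL] at h0 h1
    rw [hz0] at h0
    rw [hz1] at h1
    simp only [mul_zero, zero_add, mul_one] at h0 h1
    have hβ : (e q).2 = (e q').2 := h0
    have hα : (e q).1 = (e q').1 := Units.ext (by
      have := h1
      rw [hβ] at this
      exact add_right_cancel this)
    apply e.injective
    exact Prod.ext hα hβ
  · -- design property
    intro t ht
    set u : ZMod p := t 1 - t 0 with hu_def
    set v : ZMod p := t 2 - t 1 with hv_def
    have hu : u ≠ 0 := sub_ne_zero.mpr fun hh => (by decide : (1 : Fin 3) ≠ 0) (ht hh)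
    have hv : v ≠ 0 := sub_ne_zero.mpr fun hh => (by decide : (2 : Fin 3) ≠ 1) (ht hh)
    have huv : u + v ≠ 0 := by
      have hh : u + v = t 2 - t 0 := by rw [hu_def, hv_def]; ring
      rw [hh]
      exact sub_ne_zero.mpr fun hh2 => (by decide : (2 : Fin 3) ≠ 0) (ht hh2)
    set w : ZMod p := -u / (u + v) with hw_def
    have hw_eq : (u + v) * w = -u := by
      rw [hw_def, mul_comm]
      exact div_mul_cancel₀ _ huv
    have hw0 : w ≠ 0 := div_ne_zero (neg_ne_zero.mpr hu) huv
    have hn_lt : w.val < p := ZMod.val_lt w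
    have hn0 : w.val ≠ 0 := fun hh => hw0 (by
      rw [← ZMod.natCast_zmod_val w, hh, Nat.cast_zero])
    have hn1 : w.val ≠ p - 1 := by
      intro hh
      have hw1 : w = -1 := by
        rw [← ZMod.natCast_zmod_val w, hh, Nat.cast_sub (by omega : 1 ≤ p),
          ZMod.natCast_self, Nat.cast_one, zero_sub]
      apply hv
      have h2 := hw_eq
      rw [hw1] at h2
      linear_combination -h2
    -- the key equivalences
    have cross : ∀ k : ℕ, (u * zigDiff p (k + 1) = v * zigDiff p k) ↔
        (u + v) * ((k + 1 : ℕ) : ZMod p) = -u := by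
      intro k
      have hc : ((-1 : ZMod p)) ^ k ≠ 0 := pow_ne_zero _ (by
        intro hz
        exact one_ne_zero (neg_eq_zero.mp hz))
      constructor
      · intro hh
        refine mul_left_cancel₀ hc ?_
        unfold zigDiff at hh
        push_cast [pow_succ] at hh ⊢
        linear_combination -hh
      · intro hh
        unfold zigDiff
        push_cast [pow_succ] at hh ⊢
        linear_combination (-((-1 : ZMod p) ^ k)) * hh
    have keyiff : ∀ k : ℕ, ((u + v) * ((k + 1 : ℕ) : ZMod p) = -u) ↔
        ((k + 1 : ℕ) : ZMod p) = w := by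
      intro k
      rw [hw_def, eq_div_iff huv]
      constructor <;> intro hh <;> linear_combination hh
    have valdet : ∀ k : ℕ, k < p - 2 → (((k + 1 : ℕ) : ZMod p) = w ↔ k = w.val - 1) := by
      intro k hk
      constructor
      · intro hh
        have := congrArg ZMod.val hh
        rw [ZMod.val_cast_of_lt (by omega)] at this
        omega
      · intro hh
        subst hh
        rw [show w.val - 1 + 1 = w.val by omega]
        exact ZMod.natCast_zmod_val w
    -- construct the witness
    set i : ℕ := w.val - 1 with hi_def
    have hilt : i < p - 2 := by omega
    have hDne : zigDiff p i ≠ 0 := hDk i (by omega)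
    set α0 : ZMod p := u / zigDiff p i with hα0_def
    have hα0 : α0 ≠ 0 := div_ne_zero hu hDne
    have hαD : α0 * zigDiff p i = u := by
      rw [hα0_def, div_mul_cancel₀ _ hDne]
    have hcross_i : u * zigDiff p (i + 1) = v * zigDiff p i :=
      (cross i).mpr ((keyiff i).mpr ((valdet i hilt).mpr rfl))
    have hαD' : α0 * zigDiff p (i + 1) = v := by
      rw [hα0_def, div_mul_eq_mul_div, hcross_i, mul_div_assoc, div_self hDne, mul_one]
    set β : ZMod p := t 0 - α0 * zigSeq p i with hβ_def
    set q1 : Fin (p * (p - 1)) := e.symm (Units.mk0 α0 hα0, β) with hq1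
    have heq1 : e q1 = (Units.mk0 α0 hα0, β) := e.apply_symm_apply _
    refine ⟨(q1, ⟨i, hilt⟩), ?_, ?_⟩
    · intro j
      rw [hL, heq1]
      simp only [Units.val_mk0]
      fin_cases j
      · show α0 * zigSeq p (i + 0) + β = t 0
        rw [Nat.add_zero, hβ_def]
        ring
      · show α0 * zigSeq p (i + 1) + β = t 1
        rw [zigSeq_succ, hβ_def]
        rw [hu_def] at hαD
        linear_combination hαD
      · show α0 * zigSeq p (i + 1 + 1) + β = t 2
        rw [zigSeq_succ, zigSeq_succ, hβ_def]
        rw [hu_def] at hαD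
        rw [hv_def] at hαD'
        linear_combination hαD + hαD'
    · rintro ⟨q1', i'⟩ hq'
      have h0 : ((e q1').1 : ZMod p) * zigSeq p i'.val + (e q1').2 = t 0 := hq' 0
      have h1 : ((e q1').1 : ZMod p) * zigSeq p (i'.val + 1) + (e q1').2 = t 1 := hq' 1
      have h2 : ((e q1').1 : ZMod p) * zigSeq p (i'.val + 1 + 1) + (e q1').2 = t 2 := hq' 2
      rw [zigSeq_succ] at h1
      rw [zigSeq_succ, zigSeq_succ] at h2
      have eq_u : ((e q1').1 : ZMod p) * zigDiff p i'.val = u := by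
        rw [hu_def]
        linear_combination h1 - h0
      have eq_v : ((e q1').1 : ZMod p) * zigDiff p (i'.val + 1) = v := by
        rw [hv_def]
        linear_combination h2 - h1
      have hcr : u * zigDiff p (i'.val + 1) = v * zigDiff p i'.val := by
        linear_combination zigDiff p i'.val * eq_v - zigDiff p (i'.val + 1) * eq_u
      have hieq : i'.val = i := (valdet _ i'.isLt).mp ((keyiff _).mp ((cross _).mp hcr))
      have hα'_eq : ((e q1').1 : ZMod p) = α0 := by
        have hh := eq_u
        rw [hieq] at hh
        exact mul_right_cancel₀ hDne (hh.trans hαD.symm)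
      have hβ'_eq : (e q1').2 = β := by
        rw [hβ_def]
        rw [hieq, hα'_eq] at h0
        linear_combination h0
      have heq' : e q1' = (Units.mk0 α0 hα0, β) := by
        apply Prod.ext
        · exact Units.ext (by rw [Units.val_mk0]; exact hα'_eq)
        · exact hβ'_eq
      have hq1'_eq : q1' = q1 := by
        apply e.injective
        rw [heq', heq1]
      exact Prod.ext hq1'_eq (Fin.ext hieq)
end

section
/- There is no enumeration (x_1,...,x_5) of P^1(F_4) such that the cross ratios ρ(x_1,x_2,x_3,x_4) and ρ(x_2,x_3,x_4,x_5) are distinct; equivalently, the sharply 3-transitive action of PGL_2(F_4) on P^1(F_4) admits no sequencing. -/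
open scoped LinearAlgebra.Projectivization

/-- The action of an invertible matrix on the projective line `P¹(F) = ℙ F (Fin 2 → F)`,
i.e. the fractional linear transformation determined by `A`. -/
noncomputable def fracLin {F : Type*} [Field F] (A : GL (Fin 2) F) :
    ℙ F (Fin 2 → F) → ℙ F (Fin 2 → F) :=
  Projectivization.map (Matrix.mulVecLin (A : Matrix (Fin 2) (Fin 2) F)) (by
    intro u v h
    have h2 := congrArg
      (fun w => Matrix.mulVec ((A⁻¹ : GL (Fin 2) F) : Matrix (Fin 2) (Fin 2) F) w) h
    have h1 : ((A⁻¹ : GL (Fin 2) F) : Matrix (Fin 2) (Fin 2) F) *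
        ((A : GL (Fin 2) F) : Matrix (Fin 2) (Fin 2) F) = 1 := A.inv_mul
    simp only [Matrix.mulVecLin_apply] at h2
    rwa [Matrix.mulVec_mulVec, Matrix.mulVec_mulVec, h1, Matrix.one_mulVec, Matrix.one_mulVec] at h2)

namespace NoSeq

open Matrix

variable {F : Type*} [Field F]

lemma vec_eta (v : Fin 2 → F) : ![v 0, v 1] = v := by
  funext i; fin_cases i <;> rfl

lemma vec_ne_zero {v : Fin 2 → F} (hv : v ≠ 0) : v 0 ≠ 0 ∨ v 1 ≠ 0 := by
  by_contra h
  push_neg at h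
  exact hv (by funext i; fin_cases i <;> simp [h.1, h.2])

/-- Cross-product criterion for equality in `ℙ¹`. -/
lemma mk_eq_mk_iff_cross (v w : Fin 2 → F) (hv : v ≠ 0) (hw : w ≠ 0) :
    Projectivization.mk F v hv = Projectivization.mk F w hw ↔
      v 0 * w 1 - w 0 * v 1 = 0 := by
  rw [Projectivization.mk_eq_mk_iff]
  constructor
  · rintro ⟨a, rfl⟩
    simp only [Pi.smul_apply, Units.smul_def, smul_eq_mul]
    ring
  · intro h
    rcases vec_ne_zero hw with hw0 | hw1
    · have hv0 : v 0 ≠ 0 := by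
        intro h0
        rcases vec_ne_zero hv with h' | h'
        · exact h' h0
        · apply h'
          have := h
          rw [h0] at this
          have : w 0 * v 1 = 0 := by linear_combination -this
          rcases mul_eq_zero.mp this with h'' | h''
          · exact absurd h'' hw0
          · exact h''
      refine ⟨Units.mk0 (v 0 / w 0) (div_ne_zero hv0 hw0), ?_⟩
      funext i
      fin_cases i <;>
        simp only [Pi.smul_apply, Units.smul_def, Units.val_mk0, smul_eq_mul, Fin.zero_eta, Fin.mk_one]
      · field_simp
      · field_simp
        linear_combination h
    · have hv1 : v 1 ≠ 0 := by
        intro h1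
        rcases vec_ne_zero hv with h' | h'
        swap
        · exact h' h1
        · apply h'
          have := h
          rw [h1] at this
          have : v 0 * w 1 = 0 := by linear_combination this
          rcases mul_eq_zero.mp this with h'' | h''
          · exact h''
          · exact absurd h'' hw1
      refine ⟨Units.mk0 (v 1 / w 1) (div_ne_zero hv1 hw1), ?_⟩
      funext i
      fin_cases i <;>
        simp only [Pi.smul_apply, Units.smul_def, Units.val_mk0, smul_eq_mul, Fin.zero_eta, Fin.mk_one]
      · field_simp
        linear_combination -h
      · field_simp

lemma mulVec_ne_zero (A : GL (Fin 2) F) {v : Fin 2 → F} (hv : v ≠ 0) :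
    (A : Matrix (Fin 2) (Fin 2) F) *ᵥ v ≠ 0 := by
  intro h
  apply hv
  have h2 := congrArg
    (fun w => Matrix.mulVec ((A⁻¹ : GL (Fin 2) F) : Matrix (Fin 2) (Fin 2) F) w) h
  have h1 : ((A⁻¹ : GL (Fin 2) F) : Matrix (Fin 2) (Fin 2) F) *
      ((A : GL (Fin 2) F) : Matrix (Fin 2) (Fin 2) F) = 1 := A.inv_mul
  simpa only [Matrix.mulVec_mulVec, h1, Matrix.one_mulVec, Matrix.mulVec_zero] using h2

lemma fracLin_mk (A : GL (Fin 2) F) (v : Fin 2 → F) (hv : v ≠ 0) :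
    fracLin A (Projectivization.mk F v hv) =
      Projectivization.mk F ((A : Matrix (Fin 2) (Fin 2) F) *ᵥ v) (mulVec_ne_zero A hv) := by
  unfold fracLin
  rfl

lemma fracLin_injective (A : GL (Fin 2) F) : Function.Injective (fracLin A) := by
  intro p q h
  rw [← Projectivization.mk_rep p, ← Projectivization.mk_rep q] at h ⊢
  rw [fracLin_mk, fracLin_mk, Projectivization.mk_eq_mk_iff] at h
  obtain ⟨a, ha⟩ := h
  rw [Projectivization.mk_eq_mk_iff]
  refine ⟨a, ?_⟩
  have h2 := congrArg
    (fun w => Matrix.mulVec ((A⁻¹ : GL (Fin 2) F) : Matrix (Fin 2) (Fin 2) F) w) ha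
  have h1 : ((A⁻¹ : GL (Fin 2) F) : Matrix (Fin 2) (Fin 2) F) *
      ((A : GL (Fin 2) F) : Matrix (Fin 2) (Fin 2) F) = 1 := A.inv_mul
  have h3 : (A : Matrix (Fin 2) (Fin 2) F) *ᵥ (a • q.rep) =
      a • ((A : Matrix (Fin 2) (Fin 2) F) *ᵥ q.rep) := by
    rw [Matrix.mulVec_smul]
  rw [← h3] at ha
  have h4 := congrArg
    (fun w => Matrix.mulVec ((A⁻¹ : GL (Fin 2) F) : Matrix (Fin 2) (Fin 2) F) w) ha
  simpa only [Matrix.mulVec_mulVec, h1, Matrix.one_mulVec] using h4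

lemma mulVec_apply_zero (m00 m01 m10 m11 X Y : F) :
    (!![m00, m01; m10, m11] *ᵥ ![X, Y]) 0 = m00 * X + m01 * Y := by
  simp [Matrix.mulVec, dotProduct, Fin.sum_univ_two]

lemma mulVec_apply_one (m00 m01 m10 m11 X Y : F) :
    (!![m00, m01; m10, m11] *ᵥ ![X, Y]) 1 = m10 * X + m11 * Y := by
  simp [Matrix.mulVec, dotProduct, Fin.sum_univ_two]

/-- The core construction: given four points in general position (pairwise distinct, in
cross-product coordinates) over a field of characteristic 2, there is an invertible matrix
sending `u₀ ↦ u₁ ↦ u₂ ↦ u₃`, and moreover `u₃` is NOT sent back to `u₀`. -/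
lemma buildA (h2 : (2 : F) = 0) (x0 y0 x1 y1 x2 y2 x3 y3 : F)
    (d01 : x0*y1 - x1*y0 ≠ 0) (d02 : x0*y2 - x2*y0 ≠ 0) (d03 : x0*y3 - x3*y0 ≠ 0)
    (d12 : x1*y2 - x2*y1 ≠ 0) (d13 : x1*y3 - x3*y1 ≠ 0) (d23 : x2*y3 - x3*y2 ≠ 0) :
    ∃ A : GL (Fin 2) F,
      ((A : Matrix (Fin 2) (Fin 2) F) *ᵥ ![x0, y0]) 0 * y1 -
        x1 * ((A : Matrix (Fin 2) (Fin 2) F) *ᵥ ![x0, y0]) 1 = 0 ∧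
      ((A : Matrix (Fin 2) (Fin 2) F) *ᵥ ![x1, y1]) 0 * y2 -
        x2 * ((A : Matrix (Fin 2) (Fin 2) F) *ᵥ ![x1, y1]) 1 = 0 ∧
      ((A : Matrix (Fin 2) (Fin 2) F) *ᵥ ![x2, y2]) 0 * y3 -
        x3 * ((A : Matrix (Fin 2) (Fin 2) F) *ᵥ ![x2, y2]) 1 = 0 ∧
      ((A : Matrix (Fin 2) (Fin 2) F) *ᵥ ![x3, y3]) 0 * y0 -
        x0 * ((A : Matrix (Fin 2) (Fin 2) F) *ᵥ ![x3, y3]) 1 ≠ 0 := by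
  have hdet : (!![y0*y1*y1*x2*x2*x3 + y0*x1*x1*x2*y2*y3 + x0*x1*y1*y2*y2*x3 + x0*x1*y1*x2*y2*y3, y0*x1*x1*x2*y2*x3 + y0*x1*x1*x2*x2*y3 + x0*y1*y1*x2*x2*x3 + x0*x1*y1*x2*y2*x3 + x0*x1*y1*x2*x2*y3 + x0*x1*x1*y2*y2*x3; y0*y1*y1*x2*x2*y3 + y0*x1*y1*y2*y2*x3 + y0*x1*y1*x2*y2*y3 + y0*x1*x1*y2*y2*y3 + x0*y1*y1*y2*y2*x3 + x0*y1*y1*x2*y2*y3, y0*x1*y1*x2*y2*x3 + y0*x1*y1*x2*x2*y3 + x0*y1*y1*x2*y2*x3 + x0*x1*x1*y2*y2*y3] : Matrix (Fin 2) (Fin 2) F).det ≠ 0 := by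
    rw [Matrix.det_fin_two_of]
    have hd : (y0*y1*y1*x2*x2*x3 + y0*x1*x1*x2*y2*y3 + x0*x1*y1*y2*y2*x3 + x0*x1*y1*x2*y2*y3) * (y0*x1*y1*x2*y2*x3 + y0*x1*y1*x2*x2*y3 + x0*y1*y1*x2*y2*x3 + x0*x1*x1*y2*y2*y3) - (y0*x1*x1*x2*y2*x3 + y0*x1*x1*x2*x2*y3 + x0*y1*y1*x2*x2*x3 + x0*x1*y1*x2*y2*x3 + x0*x1*y1*x2*x2*y3 + x0*x1*x1*y2*y2*x3) * (y0*y1*y1*x2*x2*y3 + y0*x1*y1*y2*y2*x3 + y0*x1*y1*x2*y2*y3 + y0*x1*x1*y2*y2*y3 + x0*y1*y1*y2*y2*x3 + x0*y1*y1*x2*y2*y3) =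
        -((x0*y1 - x1*y0) * (x0*y2 - x2*y0) * (x1*y2 - x2*y1)^2 *
          (x1*y3 - x3*y1) * (x2*y3 - x3*y2)) := by
      linear_combination (y0*y0*x1*y1*y1*y1*x2*x2*x2*y2*x3*x3 - y0*y0*x1*x1*y1*y1*x2*x2*y2*y2*x3*x3 - y0*y0*x1*x1*x1*y1*x2*x2*x2*y2*y3*y3 - y0*y0*x1*x1*x1*x1*x2*y2*y2*y2*x3*y3 - x0*y0*x1*y1*y1*y1*x2*x2*x2*y2*x3*y3 - x0*y0*x1*y1*y1*y1*x2*x2*x2*x2*y3*y3 + (-2 : F)*x0*y0*x1*x1*y1*y1*x2*x2*y2*y2*x3*y3 - x0*y0*x1*x1*x1*y1*y2*y2*y2*y2*x3*x3 - x0*y0*x1*x1*x1*y1*x2*y2*y2*y2*x3*y3 - x0*x0*y1*y1*y1*y1*x2*x2*x2*y2*x3*y3 - x0*x0*x1*y1*y1*y1*x2*y2*y2*y2*x3*x3 - x0*x0*x1*x1*y1*y1*x2*x2*y2*y2*y3*y3 + x0*x0*x1*x1*x1*y1*x2*y2*y2*y2*y3*y3) * h2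
    rw [hd]
    exact neg_ne_zero.mpr (mul_ne_zero (mul_ne_zero (mul_ne_zero (mul_ne_zero d01 d02)
      (pow_ne_zero 2 d12)) d13) d23)
  refine ⟨Matrix.GeneralLinearGroup.mkOfDetNeZero _ hdet, ?_, ?_, ?_, ?_⟩
  · show (!![y0*y1*y1*x2*x2*x3 + y0*x1*x1*x2*y2*y3 + x0*x1*y1*y2*y2*x3 + x0*x1*y1*x2*y2*y3, y0*x1*x1*x2*y2*x3 + y0*x1*x1*x2*x2*y3 + x0*y1*y1*x2*x2*x3 + x0*x1*y1*x2*y2*x3 + x0*x1*y1*x2*x2*y3 + x0*x1*x1*y2*y2*x3; y0*y1*y1*x2*x2*y3 + y0*x1*y1*y2*y2*x3 + y0*x1*y1*x2*y2*y3 + y0*x1*x1*y2*y2*y3 + x0*y1*y1*y2*y2*x3 + x0*y1*y1*x2*y2*y3, y0*x1*y1*x2*y2*x3 + y0*x1*y1*x2*x2*y3 + x0*y1*y1*x2*y2*x3 + x0*x1*x1*y2*y2*y3] *ᵥ ![x0, y0]) 0 * y1 - x1 * (!![y0*y1*y1*x2*x2*x3 + y0*x1*x1*x2*y2*y3 + x0*x1*y1*y2*y2*x3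 + x0*x1*y1*x2*y2*y3, y0*x1*x1*x2*y2*x3 + y0*x1*x1*x2*x2*y3 + x0*y1*y1*x2*x2*x3 + x0*x1*y1*x2*y2*x3 + x0*x1*y1*x2*x2*y3 + x0*x1*x1*y2*y2*x3; y0*y1*y1*x2*x2*y3 + y0*x1*y1*y2*y2*x3 + y0*x1*y1*x2*y2*y3 + y0*x1*x1*y2*y2*y3 + x0*y1*y1*y2*y2*x3 + x0*y1*y1*x2*y2*y3, y0*x1*y1*x2*y2*x3 + y0*x1*y1*x2*x2*y3 + x0*y1*y1*x2*y2*x3 + x0*x1*x1*y2*y2*y3] *ᵥ ![x0, y0]) 1 = 0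
    rw [mulVec_apply_zero, mulVec_apply_one]
    linear_combination (x0*y0*y1*y1*y1*x2*x2*x3 - x0*y0*x1*x1*x1*y2*y2*y3) * h2
  · show (!![y0*y1*y1*x2*x2*x3 + y0*x1*x1*x2*y2*y3 + x0*x1*y1*y2*y2*x3 + x0*x1*y1*x2*y2*y3, y0*x1*x1*x2*y2*x3 + y0*x1*x1*x2*x2*y3 + x0*y1*y1*x2*x2*x3 + x0*x1*y1*x2*y2*x3 + x0*x1*y1*x2*x2*y3 + x0*x1*x1*y2*y2*x3; y0*y1*y1*x2*x2*y3 + y0*x1*y1*y2*y2*x3 + y0*x1*y1*x2*y2*y3 + y0*x1*x1*y2*y2*y3 + x0*y1*y1*y2*y2*x3 + x0*y1*y1*x2*y2*y3, y0*x1*y1*x2*y2*x3 + y0*x1*y1*x2*x2*y3 + x0*y1*y1*x2*y2*x3 + x0*x1*x1*y2*y2*y3] *ᵥ ![x1, y1]) 0 * y2 - x2 * (!![y0*y1*y1*x2*x2*x3 + y0*x1*x1*x2*y2*y3 + x0*x1*y1*y2*y2*x3 + x0*x1*y1*x2*y2*y3, y0*x1*x1*x2*y2*x3 + y0*x1*x1*x2*x2*y3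 + x0*y1*y1*x2*x2*x3 + x0*x1*y1*x2*y2*x3 + x0*x1*y1*x2*x2*y3 + x0*x1*x1*y2*y2*x3; y0*y1*y1*x2*x2*y3 + y0*x1*y1*y2*y2*x3 + y0*x1*y1*x2*y2*y3 + y0*x1*x1*y2*y2*y3 + x0*y1*y1*y2*y2*x3 + x0*y1*y1*x2*y2*y3, y0*x1*y1*x2*y2*x3 + y0*x1*y1*x2*x2*y3 + x0*y1*y1*x2*y2*x3 + x0*x1*x1*y2*y2*y3] *ᵥ ![x1, y1]) 1 = 0
    rw [mulVec_apply_zero, mulVec_apply_one]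
    linear_combination (-y0*x1*y1*y1*x2*x2*x2*y3 + x0*x1*x1*y1*y2*y2*y2*x3) * h2
  · show (!![y0*y1*y1*x2*x2*x3 + y0*x1*x1*x2*y2*y3 + x0*x1*y1*y2*y2*x3 + x0*x1*y1*x2*y2*y3, y0*x1*x1*x2*y2*x3 + y0*x1*x1*x2*x2*y3 + x0*y1*y1*x2*x2*x3 + x0*x1*y1*x2*y2*x3 + x0*x1*y1*x2*x2*y3 + x0*x1*x1*y2*y2*x3; y0*y1*y1*x2*x2*y3 + y0*x1*y1*y2*y2*x3 + y0*x1*y1*x2*y2*y3 + y0*x1*x1*y2*y2*y3 + x0*y1*y1*y2*y2*x3 + x0*y1*y1*x2*y2*y3, y0*x1*y1*x2*y2*x3 + y0*x1*y1*x2*x2*y3 + x0*y1*y1*x2*y2*x3 + x0*x1*x1*y2*y2*y3] *ᵥ ![x2, y2]) 0 * y3 - x3 * (!![y0*y1*y1*x2*x2*x3 + y0*x1*x1*x2*y2*y3 + x0*x1*y1*y2*y2*x3 + x0*x1*y1*x2*y2*y3, y0*x1*x1*x2*y2*x3 + y0*x1*x1*x2*x2*y3 + x0*y1*y1*x2*x2*x3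 + x0*x1*y1*x2*y2*x3 + x0*x1*y1*x2*x2*y3 + x0*x1*x1*y2*y2*x3; y0*y1*y1*x2*x2*y3 + y0*x1*y1*y2*y2*x3 + y0*x1*y1*x2*y2*y3 + y0*x1*x1*y2*y2*y3 + x0*y1*y1*y2*y2*x3 + x0*y1*y1*x2*y2*y3, y0*x1*y1*x2*y2*x3 + y0*x1*y1*x2*x2*y3 + x0*y1*y1*x2*y2*x3 + x0*x1*x1*y2*y2*y3] *ᵥ ![x2, y2]) 1 = 0
    rw [mulVec_apply_zero, mulVec_apply_one]
    linear_combination (-y0*x1*y1*x2*y2*y2*x3*x3 - y0*x1*y1*x2*x2*y2*x3*y3 + y0*x1*x1*x2*x2*y2*y3*y3 - x0*y1*y1*x2*y2*y2*x3*x3 + x0*x1*y1*x2*y2*y2*x3*y3 + x0*x1*y1*x2*x2*y2*y3*y3) * h2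
  · show (!![y0*y1*y1*x2*x2*x3 + y0*x1*x1*x2*y2*y3 + x0*x1*y1*y2*y2*x3 + x0*x1*y1*x2*y2*y3, y0*x1*x1*x2*y2*x3 + y0*x1*x1*x2*x2*y3 + x0*y1*y1*x2*x2*x3 + x0*x1*y1*x2*y2*x3 + x0*x1*y1*x2*x2*y3 + x0*x1*x1*y2*y2*x3; y0*y1*y1*x2*x2*y3 + y0*x1*y1*y2*y2*x3 + y0*x1*y1*x2*y2*y3 + y0*x1*x1*y2*y2*y3 + x0*y1*y1*y2*y2*x3 + x0*y1*y1*x2*y2*y3, y0*x1*y1*x2*y2*x3 + y0*x1*y1*x2*x2*y3 + x0*y1*y1*x2*y2*x3 + x0*x1*x1*y2*y2*y3] *ᵥ ![x3, y3]) 0 * y0 - x0 * (!![y0*y1*y1*x2*x2*x3 + y0*x1*x1*x2*y2*y3 + x0*x1*y1*y2*y2*x3 + x0*x1*y1*x2*y2*y3, y0*x1*x1*x2*y2*x3 + y0*x1*x1*x2*x2*y3 + x0*y1*y1*x2*x2*x3 + x0*x1*y1*x2*y2*x3 + x0*x1*y1*x2*x2*y3 + x0*x1*x1*y2*y2*x3;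 y0*y1*y1*x2*x2*y3 + y0*x1*y1*y2*y2*x3 + y0*x1*y1*x2*y2*y3 + y0*x1*x1*y2*y2*y3 + x0*y1*y1*y2*y2*x3 + x0*y1*y1*x2*y2*y3, y0*x1*y1*x2*y2*x3 + y0*x1*y1*x2*x2*y3 + x0*y1*y1*x2*y2*x3 + x0*x1*x1*y2*y2*y3] *ᵥ ![x3, y3]) 1 ≠ 0
    rw [mulVec_apply_zero, mulVec_apply_one]
    have hd : (y0*y1*y1*x2*x2*x3 + y0*x1*x1*x2*y2*y3 + x0*x1*y1*y2*y2*x3 + x0*x1*y1*x2*y2*y3) * x3 + (y0*x1*x1*x2*y2*x3 + y0*x1*x1*x2*x2*y3 + x0*y1*y1*x2*x2*x3 + x0*x1*y1*x2*y2*x3 + x0*x1*y1*x2*x2*y3 + x0*x1*x1*y2*y2*x3) * y3 - 0 = (y0*y1*y1*x2*x2*x3 + y0*x1*x1*x2*y2*y3 + x0*x1*y1*y2*y2*x3 + x0*x1*y1*x2*y2*y3) * x3 + (y0*x1*x1*x2*y2*x3 + y0*x1*x1*x2*x2*y3 + x0*y1*y1*x2*x2*x3 + x0*x1*y1*x2*y2*x3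 + x0*x1*y1*x2*x2*y3 + x0*x1*x1*y2*y2*x3) * y3 := by ring
    have hc : ((y0*y1*y1*x2*x2*x3 + y0*x1*x1*x2*y2*y3 + x0*x1*y1*y2*y2*x3 + x0*x1*y1*x2*y2*y3) * x3 + (y0*x1*x1*x2*y2*x3 + y0*x1*x1*x2*x2*y3 + x0*y1*y1*x2*x2*x3 + x0*x1*y1*x2*y2*x3 + x0*x1*y1*x2*x2*y3 + x0*x1*x1*y2*y2*x3) * y3) * y0 - x0 * ((y0*y1*y1*x2*x2*y3 + y0*x1*y1*y2*y2*x3 + y0*x1*y1*x2*y2*y3 + y0*x1*x1*y2*y2*y3 + x0*y1*y1*y2*y2*x3 + x0*y1*y1*x2*y2*y3) * x3 + (y0*x1*y1*x2*y2*x3 + y0*x1*y1*x2*x2*y3 + x0*y1*y1*x2*y2*x3 + x0*x1*x1*y2*y2*y3) * y3) =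
        -((x0*y2 - x2*y0)^2 * (x1*y3 - x3*y1)^2) := by
      linear_combination (y0*y0*y1*y1*x2*x2*x3*x3 - y0*y0*x1*y1*x2*x2*x3*y3 + y0*y0*x1*x1*x2*y2*x3*y3 + y0*y0*x1*x1*x2*x2*y3*y3 - x0*y0*y1*y1*x2*y2*x3*x3 + (2:F)*x0*y0*x1*y1*x2*y2*x3*y3 - x0*y0*x1*x1*x2*y2*y3*y3 - x0*x0*y1*y1*x2*y2*x3*y3 - x0*x0*x1*y1*y2*y2*x3*y3) * h2
    rw [hc]
    exact neg_ne_zero.mpr (mul_ne_zero (pow_ne_zero 2 d02) (pow_ne_zero 2 d13))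

/-- Main abstract lemma: over a field of characteristic 2 whose projective line has exactly
5 points enumerated by `p`, there is a fractional linear map shifting the enumeration. -/
lemma key (h2 : (2 : F) = 0) (p : Fin 5 → ℙ F (Fin 2 → F))
    (hinj : Function.Injective p) (hsurj : Function.Surjective p) :
    ∃ A : GL (Fin 2) F, ∀ j : Fin 4,
      fracLin A (p ⟨j.val, by omega⟩) = p ⟨j.val + 1, by omega⟩ := by
  classical
  -- coordinates of representatives
  set v : Fin 5 → Fin 2 → F := fun i => ![(p i).rep 0, (p i).rep 1] with hv
  have hvne : ∀ i, v i ≠ 0 := by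
    intro i
    rw [hv]
    simp only []
    rw [vec_eta]
    exact Projectivization.rep_nonzero _
  have hmk : ∀ i, Projectivization.mk F (v i) (hvne i) = p i := by
    intro i
    have : v i = (p i).rep := by rw [hv]; exact vec_eta _
    rw [← Projectivization.mk_rep (p i)]
    congr 1
  -- pairwise cross products nonzero
  have hD : ∀ i j : Fin 5, i ≠ j →
      (p i).rep 0 * (p j).rep 1 - (p j).rep 0 * (p i).rep 1 ≠ 0 := by
    intro i j hij hc
    apply hij
    apply hinj
    rw [← hmk i, ← hmk j]
    rw [mk_eq_mk_iff_cross]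
    simpa [hv] using hc
  obtain ⟨A, c0, c1, c2, c3⟩ := buildA h2
    ((p 0).rep 0) ((p 0).rep 1) ((p 1).rep 0) ((p 1).rep 1)
    ((p 2).rep 0) ((p 2).rep 1) ((p 3).rep 0) ((p 3).rep 1)
    (hD 0 1 (by decide)) (hD 0 2 (by decide)) (hD 0 3 (by decide))
    (hD 1 2 (by decide)) (hD 1 3 (by decide)) (hD 2 3 (by decide))
  have step : ∀ i j : Fin 5,
      ((A : Matrix (Fin 2) (Fin 2) F) *ᵥ v i) 0 * (p j).rep 1 -
        (p j).rep 0 * ((A : Matrix (Fin 2) (Fin 2) F) *ᵥ v i) 1 = 0 →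
      fracLin A (p i) = p j := by
    intro i j hc
    rw [← hmk i, ← hmk j, fracLin_mk, mk_eq_mk_iff_cross]
    simpa [hv] using hc
  have h01 : fracLin A (p 0) = p 1 := step 0 1 (by simpa [hv] using c0)
  have h12 : fracLin A (p 1) = p 2 := step 1 2 (by simpa [hv] using c1)
  have h23 : fracLin A (p 2) = p 3 := step 2 3 (by simpa [hv] using c2)
  -- the image of p 3 is not p 0
  have h30 : fracLin A (p 3) ≠ p 0 := by
    intro hcontra
    rw [← hmk 3, ← hmk 0, fracLin_mk, mk_eq_mk_iff_cross] at hcontra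
    apply c3
    simpa [hv] using hcontra
  -- it is also not p 1, p 2, p 3, so it is p 4
  have h34 : fracLin A (p 3) = p 4 := by
    obtain ⟨i, hi⟩ := hsurj (fracLin A (p 3))
    have hi0 : i ≠ 0 := by rintro rfl; exact h30 hi.symm
    have hi1 : i ≠ 1 := by
      rintro rfl
      have := hinj (fracLin_injective A (h01.trans hi))
      exact absurd this (by decide)
    have hi2 : i ≠ 2 := by
      rintro rfl
      have := hinj (fracLin_injective A (h12.trans hi))
      exact absurd this (by decide)
    have hi3 : i ≠ 3 := by
      rintro rfl
      have := hinj (fracLin_injective A (h23.trans hi))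
      exact absurd this (by decide)
    have : i = 4 := by omega
    rw [this] at hi
    exact hi.symm
  refine ⟨A, ?_⟩
  intro j
  fin_cases j
  · exact h01
  · exact h12
  · exact h23
  · exact h34

end NoSeq

/-- The sharply 3-transitive action of `PGL₂(F₄)` on `P¹(F₄)` admits no sequencing:
for every enumeration `(x₁,…,x₅)` of the 5 points of `P¹(F₄)`, the two windows
`(x₁,x₂,x₃,x₄)` and `(x₂,x₃,x₄,x₅)` lie in the same `PGL₂(F₄)`-orbit, i.e. they have
equal cross ratios. -/
theorem stmt_12 (x : Fin 5 ≃ ℙ (GaloisField 2 2) (Fin 2 → GaloisField 2 2)) :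
    ∃ A : GL (Fin 2) (GaloisField 2 2), ∀ j : Fin 4,
      fracLin A (x ⟨j.val, by have := j.isLt; omega⟩) =
        x ⟨j.val + 1, by have := j.isLt; omega⟩ := by
  have h2 : (2 : GaloisField 2 2) = 0 := CharTwo.two_eq_zero
  exact NoSeq.key h2 (fun i => x i) x.injective x.surjective
end

section
/- Let R be a matrix arising from a sharply t-transitive action of a group G on a set X, i.e., the rows of R are the sequences (g·x_1, ..., g·x_n) for g ∈ G, for a fixed enumeration (x_1,...,x_n) of X. Then R satisfies the t-rectangle condition: whenever two 2×(t+1) submatrices of R (selecting 2 rows and t+1 columns each, possibly different column sets) agree in 2t+1 of their entries, they agree in all 2t+2 entries. -/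
/-- A matrix arising from a sharply `t`-transitive group action (rows indexed by `g ∈ G`,
with `(g, i)` entry `g • x i` for an enumeration `x` of `X`) satisfies the `t`-rectangle
condition: if two `2 × (t+1)` submatrices (rows `g₁, g₂` with columns `c`, and rows
`h₁, h₂` with columns `d`) agree in all entries except possibly at one position
`(i₀, j₀)`, then they agree everywhere. -/
theorem stmt_15 {G X : Type*} [Group G] [MulAction G X] (n t : ℕ) (x : Fin n ≃ X)
    (sharp : ∀ a b : Fin t → X, Function.Injective a → Function.Injective b →
      ∃! g : G, ∀ i, g • a i = b i)
    (g₁ g₂ h₁ h₂ : G) (c d : Fin (t + 1) → Fin n)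
    (hc : Function.Injective c) (hd : Function.Injective d)
    (i₀ : Fin 2) (j₀ : Fin (t + 1))
    (hagree : ∀ (i : Fin 2) (j : Fin (t + 1)), (i, j) ≠ (i₀, j₀) →
      (if i = 0 then g₁ else g₂) • x (c j) = (if i = 0 then h₁ else h₂) • x (d j)) :
    ∀ (i : Fin 2) (j : Fin (t + 1)),
      (if i = 0 then g₁ else g₂) • x (c j) = (if i = 0 then h₁ else h₂) • x (d j) := by
  set r : Fin 2 → G := fun i => if i = 0 then g₁ else g₂ with hr
  set s : Fin 2 → G := fun i => if i = 0 then h₁ else h₂ with hs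
  have key : r i₀ • x (c j₀) = s i₀ • x (d j₀) := by
    set i₁ : Fin 2 := i₀ + 1 with hi₁
    have hi₁ne : i₁ ≠ i₀ := by
      fin_cases i₀ <;> decide
    set g : G := (s i₁)⁻¹ * r i₁ with hg
    set k : G := (s i₀)⁻¹ * r i₀ with hk
    have hgall : ∀ j, g • x (c j) = x (d j) := by
      intro j
      have h := hagree i₁ j (by simp [Prod.ext_iff, hi₁ne])
      rw [hg, mul_smul]
      rw [show ((if i₁ = 0 then g₁ else g₂) : G) = r i₁ from rfl,
        show ((if i₁ = 0 then h₁ else h₂) : G) = s i₁ from rfl] at h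
      rw [h, inv_smul_smul]
    have hkall : ∀ j, j ≠ j₀ → k • x (c j) = x (d j) := by
      intro j hj
      have h := hagree i₀ j (by simp [Prod.ext_iff, hj])
      rw [hk, mul_smul]
      rw [show ((if i₀ = 0 then g₁ else g₂) : G) = r i₀ from rfl,
        show ((if i₀ = 0 then h₁ else h₂) : G) = s i₀ from rfl] at h
      rw [h, inv_smul_smul]
    set a : Fin t → X := fun i => x (c (j₀.succAbove i)) with ha
    set b : Fin t → X := fun i => x (d (j₀.succAbove i)) with hb
    have hainj : Function.Injective a := fun i j h => by
      simpa using j₀.succAbove_right_injective (hc (x.injective h))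
    have hbinj : Function.Injective b := fun i j h => by
      simpa using j₀.succAbove_right_injective (hd (x.injective h))
    obtain ⟨γ, _, huniq⟩ := sharp a b hainj hbinj
    have hgk : g = k := by
      rw [huniq g fun i => hgall _, huniq k fun i => hkall _ (j₀.succAbove_ne i)]
    have := hgall j₀
    rw [hgk, hk, mul_smul] at this
    calc r i₀ • x (c j₀) = s i₀ • (s i₀)⁻¹ • r i₀ • x (c j₀) := by
          rw [smul_inv_smul]
      _ = s i₀ • x (d j₀) := by rw [this]
  intro i j
  by_cases h : (i, j) = (i₀, j₀)
  · obtain ⟨h1, h2⟩ := Prod.mk.injEq .. ▸ h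
    subst h1; subst h2
    exact key
  · exact hagree i j h
end
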